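/- Let ‖·‖ be a norm on ℂⁿ, P an m-homogeneous polynomial on ℂⁿ, and L a symmetric m-linear form with L(x,...,x) = P(x) for all x. Then sup over ‖x⁽ᵏ⁾‖ ≤ 1 of |L(x⁽¹⁾,...,x⁽ᵐ⁾)| ≤ e^m · sup over ‖x‖ ≤ 1 of |P(x)|. -/

import Mathlib

open Finset

private def sg : Bool → ℂ := fun b => if b then 1 else -1

private lemma sg_norm (b : Bool) : ‖sg b‖ = 1 := by cases b <;> simp [sg]
private lemma sg_not (b : Bool) : sg (!b) = -sg b := by cases b <;> simp [sg]
private lemma sg_mul_self (b : Bool) : sg b * sg b = 1 := by cases b <;> simp [sg]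

private lemma polarization_identity (n m : ℕ)
    (L : MultilinearMap ℂ (fun _ : Fin m => (Fin n → ℂ)) ℂ)
    (hsym : ∀ (σ : Equiv.Perm (Fin m)) (x : Fin m → (Fin n → ℂ)),
      L (fun k => x (σ k)) = L x)
    (x : Fin m → (Fin n → ℂ)) :
    ∑ ε : Fin m → Bool, (∏ i, sg (ε i)) • L (fun _ => ∑ i, sg (ε i) • x i)
      = ((2 ^ m * Nat.factorial m : ℕ) : ℂ) • L x := by
  classical
  have expand : ∀ ε : Fin m → Bool,
      L (fun _ => ∑ i, sg (ε i) • x i)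
        = ∑ r : Fin m → Fin m, (∏ i, sg (ε (r i))) • L (fun i => x (r i)) := by
    intro ε
    have h1 : (L fun _ : Fin m => ∑ j, sg (ε j) • x j)
        = ∑ r : Fin m → Fin m, L fun i => sg (ε (r i)) • x (r i) :=
      L.map_sum (g := fun _ j => sg (ε j) • x j)
    rw [h1]
    exact Finset.sum_congr rfl fun r _ => L.map_smul_univ _ _
  have coeff_bij : ∀ r : Fin m → Fin m, Function.Bijective r →
      (∑ ε : Fin m → Bool, ∏ i, sg (ε i) * sg (ε (r i))) = ((2 ^ m : ℕ) : ℂ) := by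
    intro r hr
    have h1 : ∀ ε : Fin m → Bool, (∏ i, sg (ε i) * sg (ε (r i))) = 1 := by
      intro ε
      have h2 : ∏ i, sg (ε (r i)) = ∏ i, sg (ε i) :=
        (Equiv.ofBijective r hr).prod_comp fun j => sg (ε j)
      rw [Finset.prod_mul_distrib, h2, ← Finset.prod_mul_distrib]
      simp [sg_mul_self]
    simp only [h1, Finset.sum_const, card_univ, nsmul_eq_mul, mul_one]
    simp
  have coeff_zero : ∀ r : Fin m → Fin m, ¬ Function.Bijective r →
      (∑ ε : Fin m → Bool, ∏ i, sg (ε i) * sg (ε (r i))) = 0 := by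
    intro r hr
    have hns : ¬ Function.Surjective r := fun hs => hr (Finite.surjective_iff_bijective.mp hs)
    obtain ⟨j₀, hj₀⟩ : ∃ j₀, ∀ i, r i ≠ j₀ := by
      simpa [Function.Surjective, not_forall, eq_comm] using hns
    apply Finset.sum_ninvolution (g := fun ε => Function.update ε j₀ (!(ε j₀)))
    · intro ε
      have hterm : (∏ i, sg (Function.update ε j₀ (!(ε j₀)) i)
            * sg (Function.update ε j₀ (!(ε j₀)) (r i)))
          = - ∏ i, sg (ε i) * sg (ε (r i)) := by
        have hru : ∀ i, Function.update ε j₀ (!(ε j₀)) (r i) = ε (r i) := fun i =>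
          Function.update_of_ne (hj₀ i) _ _
        rw [← Finset.mul_prod_erase univ _ (mem_univ j₀),
            ← Finset.mul_prod_erase univ (fun i => sg (ε i) * sg (ε (r i))) (mem_univ j₀)]
        have he : ∏ i ∈ univ.erase j₀, sg (Function.update ε j₀ (!(ε j₀)) i)
              * sg (Function.update ε j₀ (!(ε j₀)) (r i))
            = ∏ i ∈ univ.erase j₀, sg (ε i) * sg (ε (r i)) := by
          refine Finset.prod_congr rfl fun i hi => ?_
          rw [Function.update_of_ne (Finset.mem_erase.mp hi).1, hru]
        rw [he, Function.update_self, hru, sg_not, neg_mul, neg_mul]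
      rw [hterm]; ring
    · intro ε _ h
      have := congrFun h j₀
      simp at this
    · intro ε; exact mem_univ _
    · intro ε
      funext i
      by_cases hi : i = j₀
      · subst hi; simp
      · simp [Function.update_of_ne hi]
  calc ∑ ε : Fin m → Bool, (∏ i, sg (ε i)) • L (fun _ => ∑ i, sg (ε i) • x i)
      = ∑ ε : Fin m → Bool, ∑ r : Fin m → Fin m,
          (∏ i, sg (ε i) * sg (ε (r i))) • L (fun i => x (r i)) := by
        refine Finset.sum_congr rfl fun ε _ => ?_
        rw [expand, Finset.smul_sum]
        refine Finset.sum_congr rfl fun r _ => ?_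
        rw [smul_smul, ← Finset.prod_mul_distrib]
    _ = ∑ r : Fin m → Fin m,
          (∑ ε : Fin m → Bool, ∏ i, sg (ε i) * sg (ε (r i))) • L (fun i => x (r i)) := by
        rw [Finset.sum_comm]
        exact Finset.sum_congr rfl fun r _ => (Finset.sum_smul).symm
    _ = ∑ r : Fin m → Fin m, (if Function.Bijective r
          then ((2 ^ m : ℕ) : ℂ) • L (fun i => x (r i)) else 0) := by
        refine Finset.sum_congr rfl fun r _ => ?_
        by_cases hb : Function.Bijective r
        · rw [if_pos hb, coeff_bij r hb]
        · rw [if_neg hb, coeff_zero r hb, zero_smul]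
    _ = ∑ r ∈ univ.filter (fun r : Fin m → Fin m => Function.Bijective r),
          ((2 ^ m : ℕ) : ℂ) • L (fun i => x (r i)) := by
        rw [Finset.sum_ite, Finset.sum_const_zero, add_zero]
    _ = ∑ σ : Equiv.Perm (Fin m), ((2 ^ m : ℕ) : ℂ) • L (fun i => x (σ i)) := by
        refine (Finset.sum_bij (fun (σ : Equiv.Perm (Fin m)) _ => (σ : Fin m → Fin m))
          ?_ ?_ ?_ ?_).symm
        · intro σ _; exact Finset.mem_filter.mpr ⟨mem_univ _, σ.bijective⟩
        · intro a _ b _ h; exact Equiv.coe_fn_injective h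
        · intro r hr
          exact ⟨Equiv.ofBijective r (by simpa using hr), Finset.mem_univ _, rfl⟩
        · intro σ _; rfl
    _ = ((2 ^ m * Nat.factorial m : ℕ) : ℂ) • L x := by
        have : ∀ σ : Equiv.Perm (Fin m), L (fun i => x (σ i)) = L x := fun σ => hsym σ x
        simp only [this, Finset.sum_const, card_univ, Fintype.card_perm, Fintype.card_fin]
        rw [← Nat.cast_smul_eq_nsmul ℂ, smul_smul]
        push_cast
        ring_nf

/-- Norm estimate from the polarization formula: for any norm `N` on `ℂⁿ`, an
`m`-homogeneous polynomial `P` and the symmetric `m`-linear form `L` polarizing it,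
`sup_{N(x⁽ᵏ⁾)≤1} |L(x⁽¹⁾,…,x⁽ᵐ⁾)| ≤ e^m · sup_{N(x)≤1} |P(x)|`. -/
theorem polarization_norm_estimate (n m : ℕ)
    (N : (Fin n → ℂ) → ℝ)
    (hN_tri : ∀ x y : Fin n → ℂ, N (x + y) ≤ N x + N y)
    (hN_smul : ∀ (a : ℂ) (x : Fin n → ℂ), N (a • x) = ‖a‖ * N x)
    (hN_def : ∀ x : Fin n → ℂ, N x = 0 → x = 0)
    (L : MultilinearMap ℂ (fun _ : Fin m => (Fin n → ℂ)) ℂ)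
    (hsym : ∀ (σ : Equiv.Perm (Fin m)) (x : Fin m → (Fin n → ℂ)),
      L (fun k => x (σ k)) = L x)
    (P : (Fin n → ℂ) → ℂ)
    (hP : ∀ x : Fin n → ℂ, P x = L (fun _ => x))
    (x : Fin m → (Fin n → ℂ)) (hx : ∀ k, N (x k) ≤ 1) :
    ‖L x‖ ≤ Real.exp m * ⨆ y : {y : Fin n → ℂ // N y ≤ 1}, ‖P y.1‖ := by
  classical
  have hN0 : N 0 = 0 := by simpa using hN_smul 0 0
  have hNneg : ∀ y, N (-y) = N y := fun y => by simpa using hN_smul (-1) y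
  have hNnonneg : ∀ y, 0 ≤ N y := by
    intro y
    have h := hN_tri y (-y)
    rw [add_neg_cancel, hN0, hNneg] at h
    linarith
  have hNsum : ∀ {α : Type} (s : Finset α) (f : α → (Fin n → ℂ)),
      N (∑ i ∈ s, f i) ≤ ∑ i ∈ s, N (f i) := by
    intro α s f
    induction s using Finset.cons_induction with
    | empty => simp [hN0]
    | cons a s ha ih =>
      rw [Finset.sum_cons, Finset.sum_cons]
      exact le_trans (hN_tri _ _) (by linarith)
  have hdecomp : ∀ y : Fin n → ℂ, y = ∑ j, y j • (Pi.single j 1 : Fin n → ℂ) := by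
    intro y
    funext k
    simp [Finset.sum_apply, Pi.single_apply, mul_ite]
  set CN : ℝ := ∑ j, N ((Pi.single j 1 : Fin n → ℂ)) with hCN
  have hNle : ∀ y, N y ≤ CN * ‖y‖ := by
    intro y
    calc N y = N (∑ j, y j • (Pi.single j 1 : Fin n → ℂ)) := by rw [← hdecomp]
      _ ≤ ∑ j, N (y j • (Pi.single j 1 : Fin n → ℂ)) := hNsum _ _
      _ = ∑ j, ‖y j‖ * N ((Pi.single j 1 : Fin n → ℂ)) := by simp [hN_smul]
      _ ≤ ∑ j, ‖y‖ * N ((Pi.single j 1 : Fin n → ℂ)) := by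
          refine Finset.sum_le_sum fun j _ => ?_
          exact mul_le_mul_of_nonneg_right (norm_le_pi_norm y j) (hNnonneg _)
      _ = CN * ‖y‖ := by rw [← Finset.mul_sum, hCN]; ring
  have hcont : Continuous N := by
    have hlip : ∀ a b : Fin n → ℂ, dist (N a) (N b) ≤ (max CN 0) * dist a b := by
      intro a b
      rw [Real.dist_eq, dist_eq_norm]
      have h1 : N a ≤ N (a - b) + N b := by
        have := hN_tri (a - b) b; rwa [sub_add_cancel] at this
      have h2 : N b ≤ N (a - b) + N a := by
        have := hN_tri (b - a) a
        rw [sub_add_cancel] at this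
        rwa [show b - a = -(a - b) by ring, hNneg] at this
      have h4 : N (a - b) ≤ CN * ‖a - b‖ := hNle _
      have h5 : CN * ‖a - b‖ ≤ (max CN 0) * ‖a - b‖ :=
        mul_le_mul_of_nonneg_right (le_max_left _ _) (norm_nonneg _)
      rw [abs_sub_le_iff]
      constructor <;> linarith
    have : LipschitzWith (Real.toNNReal (max CN 0)) N := by
      apply LipschitzWith.of_dist_le_mul
      intro a b
      rw [Real.coe_toNNReal _ (le_max_right _ _)]
      exact hlip a b
    exact this.continuous
  obtain ⟨R, hR0, hR⟩ : ∃ R : ℝ, 0 ≤ R ∧ ∀ y : Fin n → ℂ, N y ≤ 1 → ‖y‖ ≤ R := by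
    rcases Nat.eq_zero_or_pos n with h0 | hn
    · refine ⟨0, le_refl 0, fun y _ => ?_⟩
      have : y = 0 := funext fun i => absurd i.isLt (by omega)
      simp [this]
    · haveI : Nonempty (Fin n) := ⟨⟨0, hn⟩⟩
      have hsph : IsCompact (Metric.sphere (0 : Fin n → ℂ) 1) := isCompact_sphere 0 1
      have hne : (Metric.sphere (0 : Fin n → ℂ) 1).Nonempty :=
        NormedSpace.sphere_nonempty.mpr zero_le_one
      obtain ⟨y₀, hy₀mem, hy₀min⟩ := hsph.exists_isMinOn hne hcont.continuousOn
      have hy₀ : y₀ ≠ 0 := by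
        intro h
        rw [h] at hy₀mem
        simp at hy₀mem
      have hc : 0 < N y₀ :=
        lt_of_le_of_ne (hNnonneg _) (fun h => hy₀ (hN_def _ h.symm))
      refine ⟨(N y₀)⁻¹, inv_nonneg.mpr hc.le, fun y hy => ?_⟩
      rcases eq_or_ne y 0 with rfl | hy0
      · simp [inv_nonneg, hc.le]
      · have hyn : ‖y‖ ≠ 0 := norm_ne_zero_iff.mpr hy0
        have hypos : 0 < ‖y‖ := norm_pos_iff.mpr hy0
        have hz : ((‖y‖ : ℂ)⁻¹ • y) ∈ Metric.sphere (0 : Fin n → ℂ) 1 := by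
          simp [mem_sphere_iff_norm, norm_smul, hyn]
        have h1 : N y₀ ≤ N ((‖y‖ : ℂ)⁻¹ • y) := hy₀min hz
        rw [hN_smul] at h1
        have h2 : ‖((‖y‖ : ℂ))⁻¹‖ = ‖y‖⁻¹ := by
          rw [norm_inv, Complex.norm_real, Real.norm_eq_abs, abs_of_nonneg (norm_nonneg y)]
        rw [h2] at h1
        have key : N y₀ * ‖y‖ ≤ 1 := by
          have h3 : N y₀ * ‖y‖ ≤ (‖y‖⁻¹ * N y) * ‖y‖ :=
            mul_le_mul_of_nonneg_right h1 (norm_nonneg y)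
          have h4 : (‖y‖⁻¹ * N y) * ‖y‖ = N y := by field_simp
          rw [h4] at h3
          linarith
        rw [inv_eq_one_div, le_div_iff₀ hc]
        linarith [key]
  set C2 : ℝ := ∑ r : Fin m → Fin n, ‖L (fun i => (Pi.single (r i) 1 : Fin n → ℂ))‖ with hC2
  have hC2nn : 0 ≤ C2 := Finset.sum_nonneg fun _ _ => norm_nonneg _
  have hLbound : ∀ y : Fin n → ℂ, ‖L (fun _ => y)‖ ≤ C2 * ‖y‖ ^ m := by
    intro y
    have h1 : (L fun _ : Fin m => y) = ∑ r : Fin m → Fin n,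
        (∏ i, y (r i)) • L (fun i => (Pi.single (r i) 1 : Fin n → ℂ)) := by
      conv_lhs => rw [show (fun _ : Fin m => y)
          = (fun _ : Fin m => ∑ j, y j • (Pi.single j 1 : Fin n → ℂ)) from funext fun _ => hdecomp y]
      rw [L.map_sum (g := fun _ j => y j • (Pi.single j 1 : Fin n → ℂ))]
      exact Finset.sum_congr rfl fun r _ => L.map_smul_univ _ _
    rw [h1]
    calc ‖∑ r : Fin m → Fin n, (∏ i, y (r i)) • L (fun i => (Pi.single (r i) 1 : Fin n → ℂ))‖
        ≤ ∑ r : Fin m → Fin n, ‖(∏ i, y (r i)) • L (fun i => (Pi.single (r i) 1 : Fin n → ℂ))‖ :=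
          norm_sum_le _ _
      _ ≤ ∑ r : Fin m → Fin n, ‖y‖ ^ m * ‖L (fun i => (Pi.single (r i) 1 : Fin n → ℂ))‖ := by
          refine Finset.sum_le_sum fun r _ => ?_
          rw [norm_smul]
          refine mul_le_mul_of_nonneg_right ?_ (norm_nonneg _)
          rw [norm_prod]
          calc ∏ i, ‖y (r i)‖ ≤ ∏ _i : Fin m, ‖y‖ :=
                Finset.prod_le_prod (fun _ _ => norm_nonneg _)
                  (fun i _ => norm_le_pi_norm y (r i))
            _ = ‖y‖ ^ m := by simp
      _ = C2 * ‖y‖ ^ m := by rw [← Finset.mul_sum, hC2]; ring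
  set S : ℝ := ⨆ y : {y : Fin n → ℂ // N y ≤ 1}, ‖P y.1‖ with hS
  have hbdd : BddAbove (Set.range fun y : {y : Fin n → ℂ // N y ≤ 1} => ‖P y.1‖) := by
    refine ⟨C2 * R ^ m, ?_⟩
    rintro s ⟨y, rfl⟩
    simp only [hP]
    calc ‖L fun _ => y.1‖ ≤ C2 * ‖y.1‖ ^ m := hLbound _
      _ ≤ C2 * R ^ m :=
          mul_le_mul_of_nonneg_left (pow_le_pow_left₀ (norm_nonneg _) (hR _ y.2) m) hC2nn
  have hSle : ∀ y : Fin n → ℂ, N y ≤ 1 → ‖P y‖ ≤ S :=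
    fun y hy => le_ciSup hbdd (⟨y, hy⟩ : {y : Fin n → ℂ // N y ≤ 1})
  have hS0 : 0 ≤ S := le_trans (norm_nonneg (P 0)) (hSle 0 (by rw [hN0]; exact zero_le_one))
  rcases Nat.eq_zero_or_pos m with hm0 | hm
  · subst hm0
    have hx0 : L x = P 0 := by
      rw [hP]
      congr 1
      funext i
      exact absurd i.isLt (by omega)
    rw [hx0]
    have := hSle 0 (by rw [hN0]; exact zero_le_one)
    simpa using this
  · have hpol := polarization_identity n m L hsym x
    have hyN : ∀ ε : Fin m → Bool, N (∑ i, sg (ε i) • x i) ≤ (m : ℝ) := by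
      intro ε
      calc N (∑ i, sg (ε i) • x i) ≤ ∑ i, N (sg (ε i) • x i) := hNsum _ _
        _ = ∑ i, N (x i) := Finset.sum_congr rfl fun i _ => by rw [hN_smul, sg_norm, one_mul]
        _ ≤ ∑ _i : Fin m, (1:ℝ) := Finset.sum_le_sum fun i _ => hx i
        _ = m := by simp
    have hPhom : ∀ y : Fin n → ℂ, N y ≤ (m:ℝ) → ‖L (fun _ => y)‖ ≤ (m:ℝ) ^ m * S := by
      intro y hy
      have hmne : ((m:ℂ)) ≠ 0 := Nat.cast_ne_zero.mpr (by omega)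
      have hrewrite : (fun _ : Fin m => y) = fun _ : Fin m => (m:ℂ) • ((m:ℂ)⁻¹ • y) := by
        funext i
        rw [smul_inv_smul₀ hmne]
      rw [hrewrite, L.map_smul_univ, Finset.prod_const, norm_smul]
      have hcard : (univ : Finset (Fin m)).card = m := by simp
      rw [hcard, norm_pow]
      have hnm : ‖(m:ℂ)‖ = (m:ℝ) := by simp
      rw [hnm]
      refine mul_le_mul_of_nonneg_left ?_ (by positivity)
      have h2 : N ((m:ℂ)⁻¹ • y) ≤ 1 := by
        rw [hN_smul]
        have h3 : ‖((m:ℂ))⁻¹‖ = (m:ℝ)⁻¹ := by rw [norm_inv, hnm]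
        rw [h3]
        have hm' : (0:ℝ) < m := by exact_mod_cast hm
        calc (m:ℝ)⁻¹ * N y ≤ (m:ℝ)⁻¹ * m :=
              mul_le_mul_of_nonneg_left hy (inv_nonneg.mpr hm'.le)
          _ = 1 := inv_mul_cancel₀ hm'.ne'
      rw [← hP]
      exact hSle _ h2
    have hcard2 : Fintype.card (Fin m → Bool) = 2 ^ m := by simp
    have hnorm : (2 ^ m * Nat.factorial m : ℝ) * ‖L x‖ ≤ 2 ^ m * ((m:ℝ) ^ m * S) := by
      have h1 : ‖((2 ^ m * Nat.factorial m : ℕ) : ℂ) • L x‖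
          = (2 ^ m * Nat.factorial m : ℝ) * ‖L x‖ := by
        rw [norm_smul]
        congr 1
        push_cast
        simp
      rw [← h1, ← hpol]
      calc ‖∑ ε : Fin m → Bool, (∏ i, sg (ε i)) • L (fun _ => ∑ i, sg (ε i) • x i)‖
          ≤ ∑ ε : Fin m → Bool, ‖(∏ i, sg (ε i)) • L (fun _ => ∑ i, sg (ε i) • x i)‖ :=
            norm_sum_le _ _
        _ ≤ ∑ _ε : Fin m → Bool, (m:ℝ) ^ m * S := by
            refine Finset.sum_le_sum fun ε _ => ?_
            rw [norm_smul, norm_prod]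
            simp only [sg_norm, Finset.prod_const_one, one_mul]
            exact hPhom _ (hyN ε)
        _ = 2 ^ m * ((m:ℝ) ^ m * S) := by
            rw [Finset.sum_const, card_univ, hcard2, nsmul_eq_mul]
            push_cast
            ring
    have h2m : (0:ℝ) < 2 ^ m := by positivity
    have hfact : (0:ℝ) < (Nat.factorial m : ℝ) := by
      exact_mod_cast m.factorial_pos
    have hLx : ‖L x‖ ≤ (m:ℝ) ^ m / (Nat.factorial m : ℝ) * S := by
      rw [div_mul_eq_mul_div, le_div_iff₀ hfact]
      have h6 : (2:ℝ) ^ m * ((Nat.factorial m : ℝ) * ‖L x‖) ≤ 2 ^ m * ((m:ℝ) ^ m * S) := by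
        calc (2:ℝ) ^ m * ((Nat.factorial m : ℝ) * ‖L x‖)
            = (2 ^ m * Nat.factorial m : ℝ) * ‖L x‖ := by ring
          _ ≤ 2 ^ m * ((m:ℝ) ^ m * S) := hnorm
      have h7 := (mul_le_mul_iff_right₀ h2m).mp h6
      linarith
    have hexp : (m:ℝ) ^ m / (Nat.factorial m : ℝ) ≤ Real.exp m := by
      have h := Real.sum_le_exp_of_nonneg (x := (m:ℝ)) (Nat.cast_nonneg m) (m + 1)
      have hterm : (m:ℝ) ^ m / (Nat.factorial m : ℝ)
          ≤ ∑ i ∈ Finset.range (m + 1), (m:ℝ) ^ i / (Nat.factorial i : ℝ) :=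
        Finset.single_le_sum (f := fun i => (m:ℝ) ^ i / (Nat.factorial i : ℝ))
          (fun i _ => by positivity) (Finset.self_mem_range_succ m)
      exact hterm.trans h
    calc ‖L x‖ ≤ (m:ℝ) ^ m / (Nat.factorial m : ℝ) * S := hLx
      _ ≤ Real.exp m * S := mul_le_mul_of_nonneg_right hexp hS0
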